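/- Let A be a symmetric positive definite d×d matrix and b ∈ ℝ^d nonzero. Define s₁ = (bᵀAb/‖Ab‖²) b (the first conjugate residual iterate from s₀ = 0). Then ‖s₁‖ ≥ ‖b‖/λ_max(A). -/

import Mathlib

open Matrix

lemma eucl_norm_sq_eq_dot {d : ℕ} (x : EuclideanSpace ℝ (Fin d)) :
    ‖x‖ ^ 2 = (x : Fin d → ℝ) ⬝ᵥ (x : Fin d → ℝ) := by
  rw [← real_inner_self_eq_norm_sq]
  rw [EuclideanSpace.inner_eq_star_dotProduct, star_trivial]

/-- The first conjugate residual iterate satisfies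
`‖s₁‖ ≥ ‖b‖ / λ_max(A)`. -/
theorem first_cr_iterate_lower_bound {d : ℕ}
    (A : Matrix (Fin d) (Fin d) ℝ) (hA : A.PosDef)
    (b : EuclideanSpace ℝ (Fin d)) (hb : b ≠ 0)
    (lmax : ℝ)
    (hmax : ∀ v : EuclideanSpace ℝ (Fin d),
      (v : Fin d → ℝ) ⬝ᵥ A.mulVec v ≤ lmax * ‖v‖ ^ 2)
    (s1 : EuclideanSpace ℝ (Fin d))
    (hs1 : s1 = (((b : Fin d → ℝ) ⬝ᵥ A.mulVec b) /
      ‖(show EuclideanSpace ℝ (Fin d) from WithLp.toLp 2 (A.mulVec b))‖ ^ 2) • b) :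
    ‖b‖ / lmax ≤ ‖s1‖ := by
  set v : EuclideanSpace ℝ (Fin d) := (show EuclideanSpace ℝ (Fin d) from WithLp.toLp 2 (A.mulVec b)) with hv
  set α : ℝ := (b : Fin d → ℝ) ⬝ᵥ A.mulVec b with hα
  set β : ℝ := ‖v‖ ^ 2 with hβ
  set γ : ℝ := (v : Fin d → ℝ) ⬝ᵥ A.mulVec v with hγ
  have hbne : (b : Fin d → ℝ) ≠ 0 := fun h => hb (by ext i; exact congrFun h i)
  have hαpos : 0 < α := by
    have := hA.dotProduct_mulVec_pos hbne; rwa [star_trivial] at this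
  -- symmetry
  have hsym : ∀ x y : Fin d → ℝ, x ⬝ᵥ A.mulVec y = A.mulVec x ⬝ᵥ y := by
    intro x y
    rw [Matrix.dotProduct_mulVec, ← Matrix.mulVec_transpose]
    congr 1
    rw [show Aᵀ = A from by simpa using congrArg Matrix.transpose hA.1.symm]
  have hβdot : β = (v : Fin d → ℝ) ⬝ᵥ (v : Fin d → ℝ) := eucl_norm_sq_eq_dot v
  have hvA : (v : Fin d → ℝ) = A.mulVec b := rfl
  have hβα : (b : Fin d → ℝ) ⬝ᵥ A.mulVec (v : Fin d → ℝ) = β := by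
    have h := hsym b (A.mulVec b)
    rw [hβdot]; exact h
  have hβα' : (v : Fin d → ℝ) ⬝ᵥ A.mulVec (b : Fin d → ℝ) = β := by
    rw [hβdot]
  have hvne : (v : Fin d → ℝ) ≠ 0 := by
    intro h
    have : α = 0 := by rw [hα, ← hvA, h, dotProduct_zero]
    linarith
  have hβpos : 0 < β := by
    rw [hβdot]
    have := hA.posSemidef.1  -- dummy
    have : (0:ℝ) < ∑ i, v i * v i := by
      rcases Function.ne_iff.mp hvne with ⟨i, hi⟩
      apply Finset.sum_pos' (fun j _ => mul_self_nonneg _)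
      exact ⟨i, Finset.mem_univ i, mul_self_pos.mpr hi⟩
    simpa [dotProduct] using this
  -- Cauchy-Schwarz via discriminant: β² ≤ α γ
  have hCS : β ^ 2 ≤ α * γ := by
    have hq : 0 ≤ ((v : Fin d → ℝ) - (β/α) • (b : Fin d → ℝ)) ⬝ᵥ
        A.mulVec ((v : Fin d → ℝ) - (β/α) • (b : Fin d → ℝ)) :=
      by have := hA.posSemidef.dotProduct_mulVec_nonneg ((v : Fin d → ℝ) - (β/α) • (b : Fin d → ℝ)); rwa [star_trivial] at this
    rw [Matrix.mulVec_sub, Matrix.mulVec_smul, sub_dotProduct,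
        dotProduct_sub, dotProduct_sub, smul_dotProduct,
        dotProduct_smul, smul_dotProduct, dotProduct_smul] at hq
    rw [← hγ, hβα', hβα] at hq
    have : 0 ≤ γ - β/α * β - (β/α * β - β/α * (β/α * α)) := by
      simpa [smul_eq_mul] using hq
    have hα' : α ≠ 0 := ne_of_gt hαpos
    field_simp at this
    have h3 : 0 ≤ γ * α - β * β := by
      nlinarith [this]
    nlinarith [h3]
  have hγle : γ ≤ lmax * β := hmax v
  have hlpos : 0 < lmax := by
    have h1 := hmax b
    have hb2 : 0 < ‖b‖ ^ 2 := pow_pos (norm_pos_iff.mpr hb) 2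
    nlinarith [(by have := hA.dotProduct_mulVec_pos hbne; rwa [star_trivial] at this : 0 < (b : Fin d → ℝ) ⬝ᵥ A.mulVec b)]
  have hkey : β ≤ lmax * α := by nlinarith
  have hnorm : ‖s1‖ = (α / β) * ‖b‖ := by
    rw [hs1, norm_smul, Real.norm_eq_abs, abs_of_pos (div_pos hαpos hβpos)]
  rw [hnorm, div_le_iff₀ hlpos, div_mul_eq_mul_div, div_mul_eq_mul_div, le_div_iff₀ hβpos]
  nlinarith [norm_nonneg b, mul_nonneg hlpos.le (norm_nonneg b)]
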